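/- Let S be an inverse semigroup, ρ a left congruence with trace τ = ρ restricted to the idempotents E(S). Then the kernel of ρ is contained in the left normaliser of τ: for all a ∈ S, if a ρ g for some idempotent g, then for all idempotents e, f with e τ f one has a⁻¹ea τ a⁻¹fa. -/
import Mathlib


class InverseSemigroup (S : Type*) extends Semigroup S where
  inv : S → S
  mul_inv_mul : ∀ a : S, a * inv a * a = a
  inv_mul_inv : ∀ a : S, inv a * a * inv a = inv a
  inv_unique : ∀ a b : S, a * b * a = a → b * a * b = b → b = inv a

open InverseSemigroup

/-- `e` is an idempotent. -/
def IsIdem {S : Type*} [Mul S] (e : S) : Prop := e * e = e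

/-- `r` is a left congruence: an equivalence relation compatible with left multiplication. -/
def IsLeftCongruence {S : Type*} [Semigroup S] (r : S → S → Prop) : Prop :=
  Equivalence r ∧ ∀ a b c : S, r a b → r (c * a) (c * b)

/-- The inverse kernel of a relation: elements related to `a * a⁻¹`. -/
def InK {S : Type*} [InverseSemigroup S] (r : S → S → Prop) : Set S :=
  {a | r a (a * inv a)}

/-- The kernel: elements related to some idempotent. -/
def lker {S : Type*} [InverseSemigroup S] (r : S → S → Prop) : Set S :=
  {a | ∃ e, IsIdem e ∧ r a e}

/-- `τ` is a congruence on the semilattice of idempotents `E(S)`. -/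
def IsECong {S : Type*} [InverseSemigroup S] (τ : S → S → Prop) : Prop :=
  (∀ e f, τ e f → IsIdem e ∧ IsIdem f) ∧
  (∀ e, IsIdem e → τ e e) ∧
  (∀ e f, τ e f → τ f e) ∧
  (∀ e f g, τ e f → τ f g → τ e g) ∧
  (∀ e f g, IsIdem g → τ e f → τ (g * e) (g * f))

/-- The normaliser of a congruence on the idempotents. -/
def normaliser {S : Type*} [InverseSemigroup S] (τ : S → S → Prop) : Set S :=
  {a | ∀ e f, τ e f → τ (a * e * inv a) (a * f * inv a) ∧ τ (inv a * e * a) (inv a * f * a)}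

/-- `T` is a full inverse subsemigroup of `S`. -/
def IsFullInverseSub {S : Type*} [InverseSemigroup S] (T : Set S) : Prop :=
  (∀ e : S, IsIdem e → e ∈ T) ∧ (∀ a b, a ∈ T → b ∈ T → a * b ∈ T) ∧
  (∀ a, a ∈ T → inv a ∈ T)

section Aux
variable {S : Type*} [InverseSemigroup S]

lemma aux_inv_idem (e : S) (he : IsIdem e) : inv e = e :=
  (inv_unique e e (by rw [he, he]) (by rw [he, he])).symm

lemma aux_mul_idem (e f : S) (he : IsIdem e) (hf : IsIdem f) : IsIdem (e * f) := by
  have he' : ∀ x : S, e * (e * x) = e * x := fun x => by rw [← mul_assoc, he]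
  have hf' : ∀ x : S, f * (f * x) = f * x := fun x => by rw [← mul_assoc, hf]
  set x := inv (e * f) with hx
  have h1 : (e * f) * x * (e * f) = e * f := mul_inv_mul (e * f)
  have h2 : x * (e * f) * x = x := inv_mul_inv (e * f)
  have hy1 : (e * f) * (f * x * e) * (e * f) = e * f := by
    calc (e * f) * (f * x * e) * (e * f)
        = (e * f) * x * (e * f) := by
          simp only [mul_assoc, hf', he']
      _ = e * f := h1
  have hy2 : (f * x * e) * (e * f) * (f * x * e) = f * x * e := by
    have : x * (e * f) * x = x := h2
    calc (f * x * e) * (e * f) * (f * x * e)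
        = f * (x * (e * f) * x) * e := by
          simp only [mul_assoc, he', hf']
      _ = f * x * e := by rw [this, mul_assoc]
  have hxeq : f * x * e = x := inv_unique (e * f) (f * x * e) hy1 hy2
  have hxid : IsIdem x := by
    show x * x = x
    calc x * x = (f * x * e) * (f * x * e) := by rw [hxeq]
      _ = f * (x * (e * f) * x) * e := by simp only [mul_assoc]
      _ = f * x * e := by rw [h2, mul_assoc]
      _ = x := hxeq
  -- e*f is an inverse of x, and inv x = x, so e*f = x
  have hef : e * f = inv x := inv_unique x (e * f) h2 h1
  rw [hef, aux_inv_idem x hxid]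
  exact hxid

lemma aux_idem_comm (e f : S) (he : IsIdem e) (hf : IsIdem f) : e * f = f * e := by
  have h1 : IsIdem (e * f) := aux_mul_idem e f he hf
  have h2 : IsIdem (f * e) := aux_mul_idem f e hf he
  have he' : ∀ x : S, e * (e * x) = e * x := fun x => by rw [← mul_assoc, he]
  have hf' : ∀ x : S, f * (f * x) = f * x := fun x => by rw [← mul_assoc, hf]
  have ha : (e * f) * (f * e) * (e * f) = e * f := by
    have h : (e * f) * (f * e) * (e * f) = (e * f) * (e * f) := by
      simp only [mul_assoc, hf', he']
    rw [h]; exact h1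
  have hb : (f * e) * (e * f) * (f * e) = f * e := by
    have h : (f * e) * (e * f) * (f * e) = (f * e) * (f * e) := by
      simp only [mul_assoc, he', hf']
    rw [h]; exact h2
  have : f * e = inv (e * f) := inv_unique (e * f) (f * e) ha hb
  rw [this, aux_inv_idem (e * f) h1]

end Aux

theorem stmt3 {S : Type*} [InverseSemigroup S] (r : S → S → Prop)
    (hr : IsLeftCongruence r) :
    ∀ a g : S, IsIdem g → r a g →
      ∀ e f : S, IsIdem e → IsIdem f → r e f →
        r (inv a * e * a) (inv a * f * a) := by
  intro a g hg hag e f he hf hef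
  obtain ⟨⟨_, hsym, htrans⟩, hleft⟩ := hr
  have h1 : r (inv a * e * a) (inv a * e * g) := hleft a g (inv a * e) hag
  have h2 : r (inv a * f * a) (inv a * f * g) := hleft a g (inv a * f) hag
  have h3 : r (inv a * g * e) (inv a * g * f) := hleft e f (inv a * g) hef
  have key1 : inv a * e * g = inv a * g * e := by
    rw [mul_assoc, mul_assoc, aux_idem_comm e g he hg]
  have key2 : inv a * f * g = inv a * g * f := by
    rw [mul_assoc, mul_assoc, aux_idem_comm f g hf hg]
  rw [key1] at h1
  rw [key2] at h2
  exact htrans h1 (htrans h3 (hsym h2))
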